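/- arXiv:2402.09164 — 3 statements merged into one kernel-verified Lean document; each statement's English description precedes it below -/
import Mathlib

section
/- Let F : 2^V → ℝ be a monotone non-decreasing submodular function with F(∅) = 0, and let k ≥ 1. Let S_greedy be the set produced by the greedy algorithm that, for i = 1 to k, adds the element maximizing the marginal gain. Then F(S_greedy) ≥ (1 − 1/e) · max{F(S) : S ⊆ V, |S| ≤ k}. -/
/-- Nemhauser–Wolsey–Fisher: the greedy algorithm for maximizing a monotone
non-decreasing submodular function `F` with `F ∅ = 0` under a cardinality
constraint `k` achieves at least a `(1 - 1/e)` fraction of the optimum. -/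
theorem greedy_submodular_one_sub_inv_e {V : Type*} [DecidableEq V]
    (F : Finset V → ℝ)
    (hsub : ∀ Sa Sb : Finset V, Sa ⊆ Sb → ∀ α ∉ Sb,
      F (insert α Sa) - F Sa ≥ F (insert α Sb) - F Sb)
    (hmono : ∀ S T : Finset V, S ⊆ T → F S ≤ F T)
    (hempty : F ∅ = 0)
    (k : ℕ) (hk : 1 ≤ k)
    (S : ℕ → Finset V) (hS0 : S 0 = ∅)
    (hgreedy : ∀ i < k, ∃ α ∉ S i, S (i + 1) = insert α (S i) ∧
      ∀ β ∉ S i, F (insert β (S i)) ≤ F (insert α (S i))) :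
    ∀ T : Finset V, T.card ≤ k →
      F (S k) ≥ (1 - (Real.exp 1)⁻¹) * F T := by
  intro T hT
  have hk' : (1:ℝ) ≤ (k:ℝ) := by exact_mod_cast hk
  have hkpos : (0:ℝ) < (k:ℝ) := lt_of_lt_of_le one_pos hk'
  -- Key submodularity lemma
  have key : ∀ (D A : Finset V), F (A ∪ D) - F A ≤ ∑ α ∈ D \ A, (F (insert α A) - F A) := by
    intro D
    induction D using Finset.induction_on with
    | empty => intro A; simp
    | @insert x D' hx ih =>
      intro A
      by_cases hxA : x ∈ A
      · have h1 : A ∪ insert x D' = A ∪ D' := by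
          ext y; simp only [Finset.mem_union, Finset.mem_insert]
          constructor
          · rintro (h | rfl | h) <;> simp_all
          · tauto
        have h2 : (insert x D') \ A = D' \ A := Finset.insert_sdiff_of_mem _ hxA
        rw [h1, h2]; exact ih A
      · have hxU : x ∉ A ∪ D' := by simp [hxA, hx]
        have h1 : A ∪ insert x D' = insert x (A ∪ D') := Finset.union_insert x A D'
        have h2 : (insert x D') \ A = insert x (D' \ A) := by
          ext y
          simp only [Finset.mem_sdiff, Finset.mem_insert]
          constructor
          · rintro ⟨h | h, h2⟩ <;> tauto
          · rintro (rfl | ⟨h1, h2⟩) <;> simp_all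
        have hxDA : x ∉ D' \ A := by simp [hx]
        rw [h1, h2, Finset.sum_insert hxDA]
        have hs := hsub A (A ∪ D') Finset.subset_union_left x hxU
        have h3 := ih A
        linarith
  -- per-step bound
  have step : ∀ i < k, F T - F (S i) ≤ (k:ℝ) * (F (S (i+1)) - F (S i)) := by
    intro i hi
    obtain ⟨α, hα, hSi1, hmax⟩ := hgreedy i hi
    set g : ℝ := F (S (i+1)) - F (S i) with hg
    have hgα : F (S (i+1)) = F (insert α (S i)) := by rw [hSi1]
    have hg0 : 0 ≤ g := by
      have := hmono (S i) (insert α (S i)) (Finset.subset_insert _ _)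
      rw [hg, hgα]; linarith
    have hsum : ∑ β ∈ T \ S i, (F (insert β (S i)) - F (S i)) ≤ ((T \ S i).card : ℝ) * g := by
      have := Finset.sum_le_card_nsmul (T \ S i) (fun β => F (insert β (S i)) - F (S i)) g
        (by
          intro β hβ
          have hβn : β ∉ S i := (Finset.mem_sdiff.mp hβ).2
          have := hmax β hβn
          show F (insert β (S i)) - F (S i) ≤ g
          rw [hg, hgα]; linarith)
      simpa [nsmul_eq_mul] using this
    have hcard : ((T \ S i).card : ℝ) ≤ (k:ℝ) := by
      have h1 : (T \ S i).card ≤ T.card := Finset.card_le_card (Finset.sdiff_subset)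
      exact_mod_cast le_trans h1 hT
    have hmonoT : F T ≤ F (S i ∪ T) := hmono T _ Finset.subset_union_right
    have hkey := key T (S i)
    have : ((T \ S i).card : ℝ) * g ≤ (k:ℝ) * g := mul_le_mul_of_nonneg_right hcard hg0
    linarith
  -- geometric decay
  have hdec : ∀ i ≤ k, F T - F (S i) ≤ (1 - 1/(k:ℝ))^i * F T := by
    intro i
    induction i with
    | zero => intro _; simp [hS0, hempty]
    | succ i ih =>
      intro hik
      have hik' : i < k := lt_of_lt_of_le (Nat.lt_succ_self i) hik
      have h1 := ih (le_of_lt hik')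
      have h2 := step i hik'
      have h3 : F T - F (S (i+1)) ≤ (1 - 1/(k:ℝ)) * (F T - F (S i)) := by
        have hne : (k:ℝ) ≠ 0 := ne_of_gt hkpos
        have : (F T - F (S i)) / (k:ℝ) ≤ F (S (i+1)) - F (S i) :=
          (div_le_iff₀ hkpos).mpr (by linarith)
        have hexp : (1 - 1/(k:ℝ)) * (F T - F (S i)) = (F T - F (S i)) - (F T - F (S i)) / (k:ℝ) := by
          field_simp
        linarith
      have h0 : (0:ℝ) ≤ 1 - 1/(k:ℝ) := by
        have : 1/(k:ℝ) ≤ 1 := by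
          rw [div_le_one hkpos]; exact hk'
        linarith
      calc F T - F (S (i+1)) ≤ (1 - 1/(k:ℝ)) * (F T - F (S i)) := h3
        _ ≤ (1 - 1/(k:ℝ)) * ((1 - 1/(k:ℝ))^i * F T) := mul_le_mul_of_nonneg_left h1 h0
        _ = (1 - 1/(k:ℝ))^(i+1) * F T := by ring
  have hFT : 0 ≤ F T := by
    have := hmono ∅ T (Finset.empty_subset T)
    linarith [hempty ▸ this]
  -- (1 - 1/k)^k ≤ e⁻¹
  have hpow : (1 - 1/(k:ℝ))^k ≤ (Real.exp 1)⁻¹ := by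
    have h0 : (0:ℝ) ≤ 1 - 1/(k:ℝ) := by
      have : 1/(k:ℝ) ≤ 1 := by rw [div_le_one hkpos]; exact hk'
      linarith
    have h1 : 1 - 1/(k:ℝ) ≤ Real.exp (-(1/(k:ℝ))) := by
      have := Real.add_one_le_exp (-(1/(k:ℝ)))
      linarith
    have h2 : (1 - 1/(k:ℝ))^k ≤ (Real.exp (-(1/(k:ℝ))))^k :=
      pow_le_pow_left₀ h0 h1 k
    have h3 : (Real.exp (-(1/(k:ℝ))))^k = Real.exp ((k:ℝ) * (-(1/(k:ℝ)))) :=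
      (Real.exp_nat_mul _ k).symm
    have h4 : (k:ℝ) * (-(1/(k:ℝ))) = -1 := by
      field_simp
    rw [h3, h4, Real.exp_neg] at h2
    exact h2
  have hfin := hdec k le_rfl
  have hmul : (1 - 1/(k:ℝ))^k * F T ≤ (Real.exp 1)⁻¹ * F T :=
    mul_le_mul_of_nonneg_right hpow hFT
  linarith
end

section
/- For the greedy algorithm maximizing a monotone submodular F with F(∅) = 0 under cardinality constraint k, after i steps the greedy solution Sᵢ satisfies F(S*) − F(Sᵢ) ≤ (1 − 1/k)ⁱ · F(S*), where S* is an optimal set of size at most k. -/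
lemma greedy_sum_bound {V : Type*} [DecidableEq V]
    (F : Finset V → ℝ)
    (hsub : ∀ Sa Sb : Finset V, Sa ⊆ Sb → ∀ α ∉ Sb,
      F (insert α Sa) - F Sa ≥ F (insert α Sb) - F Sb)
    (hmono : ∀ S T : Finset V, S ⊆ T → F S ≤ F T) :
    ∀ (A B : Finset V), F (B ∪ A) - F B ≤ ∑ α ∈ A, (F (insert α B) - F B) := by
  intro A
  induction A using Finset.induction_on with
  | empty => intro B; simp
  | @insert a A ha ih =>
    intro B
    rw [Finset.sum_insert ha]
    have hterm : 0 ≤ F (insert a B) - F B := by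
      have := hmono B (insert a B) (Finset.subset_insert _ _); linarith
    by_cases hmem : a ∈ B ∪ A
    · have : B ∪ insert a A = B ∪ A := by
        rw [Finset.union_insert, Finset.insert_eq_self.mpr hmem]
      rw [this]
      have := ih B
      linarith
    · have h1 : F (insert a (B ∪ A)) - F (B ∪ A) ≤ F (insert a B) - F B :=
        hsub B (B ∪ A) Finset.subset_union_left a hmem
      have h2 := ih B
      have : B ∪ insert a A = insert a (B ∪ A) := by
        rw [Finset.union_insert]
      rw [this]
      linarith

/-- Greedy analysis: after `i` steps the greedy solution `S i` satisfies
`F S* - F (S i) ≤ (1 - 1/k)^i * F S*`. -/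
theorem greedy_gap_bound {V : Type*} [DecidableEq V]
    (F : Finset V → ℝ)
    (hsub : ∀ Sa Sb : Finset V, Sa ⊆ Sb → ∀ α ∉ Sb,
      F (insert α Sa) - F Sa ≥ F (insert α Sb) - F Sb)
    (hmono : ∀ S T : Finset V, S ⊆ T → F S ≤ F T)
    (hempty : F ∅ = 0)
    (k : ℕ) (hk : 1 ≤ k)
    (S : ℕ → Finset V) (hS0 : S 0 = ∅)
    (hgreedy : ∀ i, ∃ α ∉ S i, S (i + 1) = insert α (S i) ∧
      ∀ β ∉ S i, F (insert β (S i)) ≤ F (insert α (S i)))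
    (Sstar : Finset V) (hcard : Sstar.card ≤ k)
    (hopt : ∀ T : Finset V, T.card ≤ k → F T ≤ F Sstar) :
    ∀ i : ℕ, F Sstar - F (S i) ≤ (1 - 1 / (k : ℝ)) ^ i * F Sstar := by
  have hkpos : (0 : ℝ) < (k : ℝ) := by exact_mod_cast hk
  have hfac : (0 : ℝ) ≤ 1 - 1 / (k : ℝ) := by
    have : 1 / (k : ℝ) ≤ 1 := by
      rw [div_le_one hkpos]; exact_mod_cast hk
    linarith
  -- step inequality
  have step : ∀ i, F Sstar - F (S (i + 1)) ≤ (1 - 1 / (k : ℝ)) * (F Sstar - F (S i)) := by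
    intro i
    obtain ⟨α, hα, hSi1, hmax⟩ := hgreedy i
    set g : ℝ := F (S (i + 1)) - F (S i) with hg
    have hg0 : 0 ≤ g := by
      have := hmono (S i) (S (i+1)) (hSi1 ▸ Finset.subset_insert _ _)
      simp [hg]; linarith
    -- each marginal term ≤ g
    have hterm : ∀ β ∈ Sstar, F (insert β (S i)) - F (S i) ≤ g := by
      intro β _
      by_cases hβ : β ∈ S i
      · rw [Finset.insert_eq_self.mpr hβ]; simpa using hg0
      · have := hmax β hβ
        rw [hg, hSi1]; linarith
    have hsum : ∑ β ∈ Sstar, (F (insert β (S i)) - F (S i)) ≤ (Sstar.card : ℝ) * g := by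
      calc ∑ β ∈ Sstar, (F (insert β (S i)) - F (S i))
          ≤ ∑ _β ∈ Sstar, g := Finset.sum_le_sum hterm
        _ = (Sstar.card : ℝ) * g := by rw [Finset.sum_const, nsmul_eq_mul]
    have hunion : F Sstar ≤ F (S i ∪ Sstar) :=
      hmono _ _ Finset.subset_union_right
    have hkey := greedy_sum_bound F hsub hmono Sstar (S i)
    have hgap : F Sstar - F (S i) ≤ (k : ℝ) * g := by
      have hck : (Sstar.card : ℝ) * g ≤ (k : ℝ) * g := by
        apply mul_le_mul_of_nonneg_right _ hg0
        exact_mod_cast hcard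
      linarith
    have : F Sstar - F (S (i+1)) = (F Sstar - F (S i)) - g := by rw [hg]; ring
    rw [this]
    have hdiv : (F Sstar - F (S i)) / (k : ℝ) ≤ g := by
      rw [div_le_iff₀ hkpos]; linarith [hgap]
    have : (1 - 1 / (k : ℝ)) * (F Sstar - F (S i))
        = (F Sstar - F (S i)) - (F Sstar - F (S i)) / (k : ℝ) := by
      field_simp
    rw [this]
    linarith
  intro i
  induction i with
  | zero => simp [hS0, hempty]
  | succ n ih =>
    calc F Sstar - F (S (n + 1)) ≤ (1 - 1 / (k : ℝ)) * (F Sstar - F (S n)) := step n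
      _ ≤ (1 - 1 / (k : ℝ)) * ((1 - 1 / (k : ℝ)) ^ n * F Sstar) :=
          mul_le_mul_of_nonneg_left ih hfac
      _ = (1 - 1 / (k : ℝ)) ^ (n + 1) * F Sstar := by ring
end

section
/- Key inequality in the greedy analysis: if F is monotone submodular, S is any set, and S* is a set with |S*| ≤ k, then there exists α ∈ S* \ S such that F(S ∪ {α}) − F(S) ≥ (F(S*) − F(S)) / k. -/
private lemma telescope_bound {V : Type*} [DecidableEq V]
    (F : Finset V → ℝ)
    (hsub : ∀ Sa Sb : Finset V, Sa ⊆ Sb → ∀ α ∉ Sb,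
      F (insert α Sa) - F Sa ≥ F (insert α Sb) - F Sb)
    (S : Finset V) :
    ∀ T : Finset V, F (S ∪ T) ≤ F S + ∑ a ∈ T \ S, (F (insert a S) - F S) := by
  intro T
  induction T using Finset.induction_on with
  | empty => simp
  | @insert a T ha ih =>
    by_cases haS : a ∈ S
    · have h1 : S ∪ insert a T = S ∪ T := by
        ext x; simp only [Finset.mem_union, Finset.mem_insert]
        constructor
        · rintro (h | rfl | h) <;> simp_all
        · tauto
      have h2 : insert a T \ S = T \ S := by
        ext x; simp only [Finset.mem_sdiff, Finset.mem_insert]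
        constructor
        · rintro ⟨rfl | h, hx⟩ <;> simp_all
        · tauto
      rw [h1, h2]; exact ih
    · have h1 : S ∪ insert a T = insert a (S ∪ T) := Finset.union_insert a S T
      have h2 : insert a T \ S = insert a (T \ S) := by
        ext x
        simp only [Finset.mem_sdiff, Finset.mem_insert]
        constructor
        · rintro ⟨rfl | h, hx⟩
          · exact Or.inl rfl
          · exact Or.inr ⟨h, hx⟩
        · rintro (rfl | ⟨h, hx⟩)
          · exact ⟨Or.inl rfl, haS⟩
          · exact ⟨Or.inr h, hx⟩
      have haST : a ∉ S ∪ T := by simp [haS, ha]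
      have hkey := hsub S (S ∪ T) Finset.subset_union_left a haST
      have hasum : a ∉ T \ S := by simp [ha]
      rw [h1, h2, Finset.sum_insert hasum]
      linarith
    
/-- Key inequality in the greedy analysis: there is an element of `S* \ S`
whose marginal gain is at least `(F S* - F S) / k`. -/
theorem exists_good_marginal_gain {V : Type*} [DecidableEq V]
    (F : Finset V → ℝ)
    (hsub : ∀ Sa Sb : Finset V, Sa ⊆ Sb → ∀ α ∉ Sb,
      F (insert α Sa) - F Sa ≥ F (insert α Sb) - F Sb)
    (hmono : ∀ S T : Finset V, S ⊆ T → F S ≤ F T)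
    (k : ℕ) (hk : 1 ≤ k)
    (S Sstar : Finset V) (hcard : Sstar.card ≤ k)
    (hne : (Sstar \ S).Nonempty) :
    ∃ α ∈ Sstar \ S, F (insert α S) - F S ≥ (F Sstar - F S) / (k : ℝ) := by
  have hkpos : (0:ℝ) < k := by exact_mod_cast hk
  by_cases hs : F Sstar - F S ≤ 0
  · obtain ⟨a, ha⟩ := hne
    refine ⟨a, ha, ?_⟩
    have h1 : F S ≤ F (insert a S) := hmono _ _ (Finset.subset_insert _ _)
    have h2 : (F Sstar - F S) / (k:ℝ) ≤ 0 := div_nonpos_of_nonpos_of_nonneg hs hkpos.le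
    linarith
  · push_neg at hs
    have htel := telescope_bound F hsub S Sstar
    have hmono' : F Sstar ≤ F (S ∪ Sstar) := hmono _ _ Finset.subset_union_right
    have hsum : F Sstar - F S ≤ ∑ a ∈ Sstar \ S, (F (insert a S) - F S) := by linarith
    have hcard' : ((Sstar \ S).card : ℝ) ≤ k := by
      exact_mod_cast le_trans (Finset.card_le_card (Finset.sdiff_subset)) hcard
    have havg : ∑ a ∈ Sstar \ S, ((F Sstar - F S) / (k:ℝ)) ≤
        ∑ a ∈ Sstar \ S, (F (insert a S) - F S) := by
      rw [Finset.sum_const, nsmul_eq_mul]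
      calc ((Sstar \ S).card : ℝ) * ((F Sstar - F S) / k)
          ≤ (k:ℝ) * ((F Sstar - F S) / k) := by
            apply mul_le_mul_of_nonneg_right hcard' (div_nonneg (by linarith) hkpos.le)
        _ = F Sstar - F S := by field_simp
        _ ≤ _ := hsum
    obtain ⟨a, ha, hga⟩ := Finset.exists_le_of_sum_le hne havg
    exact ⟨a, ha, hga⟩
end
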